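/- For any two centrally symmetric convex bodies K, L in the plane, 2·vol(L)·vol(K) − 4·V(K,L)² + vol(K)·∫_{S¹} (h_L²/h_K) dS_K ≤ 0, where V(K,L) is the mixed volume (mixed area) and S_K is the surface area measure of K. -/

import Mathlib

open Real Set MeasureTheory
open scoped RealInnerProductSpace Pointwise ENNReal

lemma Icc_add_Icc' {a b c d : ℝ} (hab : a ≤ b) (hcd : c ≤ d) :
    Icc a b + Icc c d = Icc (a + c) (b + d) := by
  ext x
  constructor
  · rintro ⟨y, hy, z, hz, rfl⟩
    exact ⟨add_le_add hy.1 hz.1, add_le_add hy.2 hz.2⟩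
  · rintro ⟨h1, h2⟩
    refine ⟨max a (x - d), ⟨le_max_left _ _, max_le hab (by linarith)⟩,
      x - max a (x - d), ⟨?_, ?_⟩, by ring⟩
    · rcases max_cases a (x - d) with ⟨hm, _⟩ | ⟨hm, _⟩ <;> rw [hm] <;> linarith
    · rcases max_cases a (x - d) with ⟨hm, _⟩ | ⟨hm, _⟩ <;> rw [hm] <;> linarith

lemma vol_add_1d {X Y : Set ℝ} (hXc : IsCompact X) (hXv : Convex ℝ X) (hXn : X.Nonempty)
    (hYc : IsCompact Y) (hYv : Convex ℝ Y) (hYn : Y.Nonempty) :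
    volume X + volume Y ≤ volume (X + Y) := by
  have hX : X = Icc (sInf X) (sSup X) := by
    apply Subset.antisymm
    · exact fun x hx => ⟨csInf_le hXc.bddBelow hx, le_csSup hXc.bddAbove hx⟩
    · exact hXv.ordConnected.out (hXc.sInf_mem hXn) (hXc.sSup_mem hXn)
  have hY : Y = Icc (sInf Y) (sSup Y) := by
    apply Subset.antisymm
    · exact fun x hx => ⟨csInf_le hYc.bddBelow hx, le_csSup hYc.bddAbove hx⟩
    · exact hYv.ordConnected.out (hYc.sInf_mem hYn) (hYc.sSup_mem hYn)
  have h1 : sInf X ≤ sSup X := csInf_le_csSup hXn hXc.bddBelow hXc.bddAbove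
  have h2 : sInf Y ≤ sSup Y := csInf_le_csSup hYn hYc.bddBelow hYc.bddAbove
  rw [hX, hY, Icc_add_Icc' h1 h2, Real.volume_Icc, Real.volume_Icc, Real.volume_Icc,
    ← ENNReal.ofReal_add (by linarith) (by linarith)]
  exact le_of_eq (by ring_nf)

lemma core_R2 {A B : Set (ℝ × ℝ)} (hAc : IsCompact A) (hAv : Convex ℝ A)
    (hBc : IsCompact B) (hBv : Convex ℝ B) {m h : ℝ}
    (hAg : IsGreatest (Prod.fst '' A) h) (hAl : IsLeast (Prod.fst '' A) m)
    (hBg : IsGreatest (Prod.fst '' B) h) (hBl : IsLeast (Prod.fst '' B) m) :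
    2 * volume A + 2 * volume B ≤ volume (A + B) := by
  -- slices
  set slA : ℝ → Set ℝ := fun s => {y | (s, y) ∈ A} with hslA
  set slB : ℝ → Set ℝ := fun s => {y | (s, y) ∈ B} with hslB
  have slice_ne : ∀ {C : Set (ℝ × ℝ)}, Convex ℝ C → IsGreatest (Prod.fst '' C) h →
      IsLeast (Prod.fst '' C) m → ∀ s ∈ Icc m h, {y | (s, y) ∈ C}.Nonempty := by
    rintro C hCv ⟨⟨q, hqC, hq⟩, hub⟩ ⟨⟨p, hpC, hp⟩, hlb⟩ s hs
    rcases eq_or_lt_of_le (hs.1.trans hs.2 : m ≤ h) with heq | hlt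
    · refine ⟨p.2, ?_⟩
      have : s = p.1 := by rw [hp]; linarith [hs.1, hs.2]
      simpa [this] using hpC
    · set θ : ℝ := (s - m) / (h - m) with hθ
      have hθ0 : 0 ≤ θ := div_nonneg (by linarith [hs.1]) (by linarith)
      have hθ1 : θ ≤ 1 := by
        rw [hθ, div_le_one (by linarith)]; linarith [hs.2]
      have hmem := hCv hpC hqC (by linarith : (0:ℝ) ≤ 1 - θ) hθ0 (by ring)
      refine ⟨((1 - θ) • p + θ • q).2, ?_⟩
      have hθm : θ * (h - m) = s - m := div_mul_cancel₀ _ (by linarith : h - m ≠ 0)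
      have hfst : ((1 - θ) • p + θ • q).1 = s := by
        simp only [Prod.fst_add, Prod.smul_fst, smul_eq_mul, hp, hq]
        nlinarith [hθm]
      show (s, ((1 - θ) • p + θ • q).2) ∈ C
      rw [show (s, ((1 - θ) • p + θ • q).2) = (1 - θ) • p + θ • q from Prod.ext hfst.symm rfl]
      exact hmem
  have slice_cc : ∀ {C : Set (ℝ × ℝ)}, IsCompact C → Convex ℝ C → ∀ s : ℝ,
      IsCompact {y | (s, y) ∈ C} ∧ Convex ℝ {y | (s, y) ∈ C} := by
    intro C hCc hCv s
    constructor
    · exact IsCompact.of_isClosed_subset (hCc.image continuous_snd)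
        (hCc.isClosed.preimage (Continuous.prodMk_right s))
        (fun y hy => ⟨(s, y), hy, rfl⟩)
    · intro y1 h1 y2 h2 a b ha hb hab
      have := hCv h1 h2 ha hb hab
      have hss : a * s + b * s = s := by rw [← add_mul, hab, one_mul]
      have heq : a • (s, y1) + b • (s, y2) = (s, a • y1 + b • y2) := by
        ext
        · simpa [smul_eq_mul] using hss
        · simp [smul_eq_mul]
      rwa [heq] at this
  have hAm : MeasurableSet A := hAc.isClosed.measurableSet
  have hBm : MeasurableSet B := hBc.isClosed.measurableSet
  have hABc : IsCompact (A + B) := hAc.add hBc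
  have hABm : MeasurableSet (A + B) := hABc.isClosed.measurableSet
  have volA : volume A = ∫⁻ s, volume (slA s) := by
    rw [Measure.volume_eq_prod, Measure.prod_apply hAm]; rfl
  have volB : volume B = ∫⁻ s, volume (slB s) := by
    rw [Measure.volume_eq_prod, Measure.prod_apply hBm]; rfl
  have volAB : volume (A + B) = ∫⁻ t, volume {y | (t, y) ∈ A + B} := by
    rw [Measure.volume_eq_prod, Measure.prod_apply hABm]; rfl
  have key : ∀ t : ℝ, volume (slA (t/2)) + volume (slB (t/2))
      ≤ volume {y | (t, y) ∈ A + B} := by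
    intro t
    by_cases ht : t/2 ∈ Icc m h
    · have hA2 := slice_ne hAv hAg hAl _ ht
      have hB2 := slice_ne hBv hBg hBl _ ht
      have hsub : slA (t/2) + slB (t/2) ⊆ {y | (t, y) ∈ A + B} := by
        rintro y ⟨y1, hy1, y2, hy2, rfl⟩
        refine ⟨(t/2, y1), hy1, (t/2, y2), hy2, ?_⟩
        ext <;> simp <;> ring
      calc volume (slA (t/2)) + volume (slB (t/2))
          ≤ volume (slA (t/2) + slB (t/2)) :=
            vol_add_1d (slice_cc hAc hAv _).1 (slice_cc hAc hAv _).2 hA2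
              (slice_cc hBc hBv _).1 (slice_cc hBc hBv _).2 hB2
        _ ≤ _ := measure_mono hsub
    · have hA2 : slA (t/2) = ∅ := by
        ext y; simp only [mem_empty_iff_false, iff_false, hslA, mem_setOf_eq]
        intro hy
        exact ht ⟨hAl.2 ⟨(t/2, y), hy, rfl⟩, hAg.2 ⟨(t/2, y), hy, rfl⟩⟩
      have hB2 : slB (t/2) = ∅ := by
        ext y; simp only [mem_empty_iff_false, iff_false, hslB, mem_setOf_eq]
        intro hy
        exact ht ⟨hBl.2 ⟨(t/2, y), hy, rfl⟩, hBg.2 ⟨(t/2, y), hy, rfl⟩⟩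
      simp [hA2, hB2]
  have mA : Measurable fun s => volume (slA s) := measurable_measure_prodMk_left hAm
  have mB : Measurable fun s => volume (slB s) := measurable_measure_prodMk_left hBm
  have half : ∀ {f : ℝ → ℝ≥0∞}, Measurable f →
      (∫⁻ t, f (t/2)) = 2 * ∫⁻ s, f s := by
    intro f hf
    have h1 : (fun t : ℝ => f (t/2)) = fun t => f (2⁻¹ * t) := by
      funext t; rw [div_eq_inv_mul]
    rw [h1, ← lintegral_map hf (measurable_const_mul 2⁻¹),
      Real.map_volume_mul_left (by norm_num : (2:ℝ)⁻¹ ≠ 0), lintegral_smul_measure]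
    norm_num
  calc 2 * volume A + 2 * volume B
      = (∫⁻ t, volume (slA (t/2))) + ∫⁻ t, volume (slB (t/2)) := by
        rw [volA, volB, ← half mA, ← half mB]
    _ = ∫⁻ t, (volume (slA (t/2)) + volume (slB (t/2))) := by
        have mA2 : Measurable fun t : ℝ => volume (slA (t/2)) := by
          exact mA.comp (measurable_id.div_const 2)
        rw [← lintegral_add_left mA2]
    _ ≤ ∫⁻ t, volume {y | (t, y) ∈ A + B} := lintegral_mono key
    _ = volume (A + B) := volAB.symm

/-- The support function of a set `K` at `u`. -/
noncomputable def suppFn (K : Set (EuclideanSpace ℝ (Fin 2)))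
    (u : EuclideanSpace ℝ (Fin 2)) : ℝ :=
  sSup ((fun x => ⟪x, u⟫) '' K)

section suppFnLemmas

local notation "E" => EuclideanSpace ℝ (Fin 2)

lemma inner_cont (u : E) : Continuous fun x : E => ⟪x, u⟫ :=
  continuous_id.inner continuous_const

lemma suppFn_isGreatest {K : Set E} (hKc : IsCompact K) (hKn : K.Nonempty) (u : E) :
    IsGreatest ((fun x => ⟪x, u⟫) '' K) (suppFn K u) :=
  (hKc.image (inner_cont u)).isGreatest_sSup (hKn.image _)

lemma isGreatest_image_mul {c : ℝ} (hc : 0 ≤ c) {S : Set ℝ} {M : ℝ} (hM : IsGreatest S M) :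
    IsGreatest ((fun x => c * x) '' S) (c * M) :=
  ⟨⟨M, hM.1, rfl⟩, by rintro _ ⟨x, hx, rfl⟩; exact mul_le_mul_of_nonneg_left (hM.2 hx) hc⟩

lemma suppFn_smul_set {K : Set E} (hKc : IsCompact K) (hKn : K.Nonempty) {c : ℝ}
    (hc : 0 ≤ c) (u : E) : suppFn (c • K) u = c * suppFn K u := by
  have himg : (fun x => ⟪x, u⟫) '' (c • K) = (fun r => c * r) '' ((fun x => ⟪x, u⟫) '' K) := by
    rw [image_image]
    ext r
    constructor
    · rintro ⟨x, hx, rfl⟩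
      rcases mem_smul_set.mp hx with ⟨k, hk, rfl⟩
      exact ⟨k, hk, (real_inner_smul_left _ _ _).symm⟩
    · rintro ⟨k, hk, rfl⟩
      exact ⟨c • k, smul_mem_smul_set hk, real_inner_smul_left _ _ _⟩
  rw [suppFn, himg]
  exact (isGreatest_image_mul hc (suppFn_isGreatest hKc hKn u)).csSup_eq

lemma suppFn_smul_vec {K : Set E} (hKc : IsCompact K) (hKn : K.Nonempty) {c : ℝ}
    (hc : 0 ≤ c) (u : E) : suppFn K (c • u) = c * suppFn K u := by
  have himg : (fun x => ⟪x, c • u⟫) '' K = (fun r => c * r) '' ((fun x => ⟪x, u⟫) '' K) := by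
    rw [image_image]
    apply image_congr
    intro x _
    exact real_inner_smul_right _ _ _
  rw [suppFn, himg]
  exact (isGreatest_image_mul hc (suppFn_isGreatest hKc hKn u)).csSup_eq

lemma suppFn_neg_symm {K : Set E} (hKs : K = -K) (u : E) :
    suppFn K (-u) = suppFn K u := by
  have himg : (fun x => ⟪x, -u⟫) '' K = (fun x => ⟪x, u⟫) '' K := by
    conv_rhs => rw [hKs]
    ext r
    constructor
    · rintro ⟨x, hx, rfl⟩
      refine ⟨-x, ?_, ?_⟩
      · rw [Set.mem_neg, neg_neg]; exact hx
      · show ⟪-x, u⟫ = ⟪x, -u⟫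
        rw [inner_neg_left, inner_neg_right]
    · rintro ⟨x, hx, rfl⟩
      rw [Set.mem_neg] at hx
      exact ⟨-x, hx, by show ⟪-x, -u⟫ = ⟪x, u⟫; rw [inner_neg_left, inner_neg_right, neg_neg]⟩
  rw [suppFn, suppFn, himg]

lemma suppFn_zero_vec {K : Set E} (hKn : K.Nonempty) : suppFn K 0 = 0 := by
  have : (fun x : E => ⟪x, (0:E)⟫) '' K = {0} := by
    ext r
    simp only [inner_zero_right, mem_singleton_iff]
    constructor
    · rintro ⟨x, _, rfl⟩; rfl
    · rintro rfl; exact ⟨hKn.some, hKn.some_mem, rfl⟩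
  rw [suppFn, this, csSup_singleton]

lemma suppFn_pos {K : Set E} (hKc : IsCompact K) (hK0 : (0:E) ∈ interior K)
    {u : E} (hu : u ≠ 0) : 0 < suppFn K u := by
  have hKn : (0:E) ∈ K := interior_subset hK0
  obtain ⟨ε, hε, hball⟩ := Metric.mem_nhds_iff.mp (mem_interior_iff_mem_nhds.mp hK0)
  have hun : 0 < ‖u‖ := norm_pos_iff.mpr hu
  set x : E := (ε / (2 * ‖u‖)) • u with hx
  have hxK : x ∈ K := by
    apply hball
    rw [Metric.mem_ball, dist_zero_right, hx, norm_smul, Real.norm_eq_abs,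
      abs_of_pos (by positivity)]
    have : ε / (2 * ‖u‖) * ‖u‖ = ε / 2 := by field_simp
    rw [this]
    linarith
  have hinner : ⟪x, u⟫ = (ε / (2 * ‖u‖)) * ‖u‖^2 := by
    rw [hx, real_inner_smul_left, real_inner_self_eq_norm_sq]
  have hpos : 0 < ⟪x, u⟫ := by rw [hinner]; positivity
  exact lt_of_lt_of_le hpos ((suppFn_isGreatest hKc ⟨0, hKn⟩ u).2 ⟨x, hxK, rfl⟩)

lemma suppFn_nonneg {K : Set E} (hKc : IsCompact K) (h0 : (0:E) ∈ K) (u : E) :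
    0 ≤ suppFn K u := by
  have := (suppFn_isGreatest hKc ⟨0, h0⟩ u).2 ⟨0, h0, inner_zero_left u⟩
  exact this

end suppFnLemmas

section bonnesen

local notation "E" => EuclideanSpace ℝ (Fin 2)

lemma bonnesen_E {A B : Set (EuclideanSpace ℝ (Fin 2))}
    (hAc : IsCompact A) (hAv : Convex ℝ A) (hAn : A.Nonempty) (hAs : A = -A)
    (hBc : IsCompact B) (hBv : Convex ℝ B) (hBn : B.Nonempty) (hBs : B = -B)
    {u : EuclideanSpace ℝ (Fin 2)} (hu : u ≠ 0) (hsup : suppFn A u = suppFn B u) :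
    2 * volume A + 2 * volume B ≤ volume (A + B) := by
  classical
  set v : E := ‖u‖⁻¹ • u with hv
  have hun : 0 < ‖u‖ := norm_pos_iff.mpr hu
  have hvnorm : ‖v‖ = 1 := norm_smul_inv_norm hu
  have hortho : Orthonormal ℝ (({0} : Set (Fin 2)).restrict ![v, v]) := by
    constructor
    · rintro ⟨i, hi⟩
      have hi0 : i = 0 := hi
      subst hi0
      exact hvnorm
    · rintro ⟨i, hi⟩ ⟨j, hj⟩ hne
      exact absurd (Subtype.ext ((show i = 0 from hi).trans (show j = 0 from hj).symm)) hne
  obtain ⟨b, hb⟩ := hortho.exists_orthonormalBasis_extension_of_card_eq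
    (by simp [finrank_euclideanSpace_fin])
  have hb0 : b 0 = v := by simpa using hb 0 rfl
  set ψe : EuclideanSpace ℝ (Fin 2) ≃ᵐ ℝ × ℝ :=
    (b.repr.toHomeomorph.toMeasurableEquiv).trans
      ((MeasurableEquiv.toLp 2 (Fin 2 → ℝ)).symm.trans (MeasurableEquiv.finTwoArrow)) with hψedef
  have hmp : MeasurePreserving ψe volume volume :=
    (volume_preserving_finTwoArrow ℝ).comp
      ((EuclideanSpace.volume_preserving_symm_measurableEquiv_toLp (Fin 2)).comp
        b.measurePreserving_repr)
  have hψe_eq : ⇑ψe = fun x : E => ((⟪x, b 0⟫ : ℝ), (⟪x, b 1⟫ : ℝ)) := by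
    funext x
    show (b.repr x 0, b.repr x 1) = _
    rw [b.repr_apply_apply, b.repr_apply_apply, real_inner_comm (b 0), real_inner_comm (b 1)]
  -- algebraic properties
  have hadd : ∀ x y : E, ψe (x + y) = ψe x + ψe y := by
    intro x y
    rw [hψe_eq]
    simp [inner_add_left, Prod.ext_iff]
  have hcomb : ∀ (c d : ℝ) (x y : E), ψe (c • x + d • y) = c • ψe x + d • ψe y := by
    intro c d x y
    rw [hψe_eq]
    simp only [inner_add_left, real_inner_smul_left, Prod.ext_iff, Prod.smul_fst,
      Prod.smul_snd, Prod.fst_add, Prod.snd_add, smul_eq_mul]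
    constructor <;> trivial
  have himage_add : ψe '' (A + B) = ψe '' A + ψe '' B := by
    ext r
    constructor
    · rintro ⟨z, ⟨x, hx, y, hy, rfl⟩, rfl⟩
      exact ⟨ψe x, ⟨x, hx, rfl⟩, ψe y, ⟨y, hy, rfl⟩, (hadd x y).symm⟩
    · rintro ⟨p, ⟨x, hx, rfl⟩, q, ⟨y, hy, rfl⟩, rfl⟩
      exact ⟨x + y, ⟨x, hx, y, hy, rfl⟩, hadd x y⟩
  have hconv : ∀ {C : Set E}, Convex ℝ C → Convex ℝ (ψe '' C) := by
    intro C hC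
    rintro _ ⟨x, hx, rfl⟩ _ ⟨y, hy, rfl⟩ c d hc hd hcd
    exact ⟨c • x + d • y, hC hx hy hc hd hcd, hcomb c d x y⟩
  have hcont : Continuous ψe := by
    rw [hψe_eq]
    exact (inner_cont (b 0)).prodMk (inner_cont (b 1))
  -- first coordinate
  have hfst : ∀ (C : Set E), Prod.fst '' (ψe '' C) = (fun x => ⟪x, v⟫) '' C := by
    intro C
    rw [image_image]
    apply image_congr
    intro x _
    rw [hψe_eq, hb0]
  -- greatest/least facts
  set h : ℝ := suppFn A v with hh
  have hsv : suppFn B v = h := by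
    have h1 : suppFn A v = ‖u‖⁻¹ * suppFn A u := suppFn_smul_vec hAc hAn (by positivity) u
    have h2 : suppFn B v = ‖u‖⁻¹ * suppFn B u := suppFn_smul_vec hBc hBn (by positivity) u
    rw [hh, h1, h2, hsup]
  have hgA : IsGreatest ((fun x => ⟪x, v⟫) '' A) h := suppFn_isGreatest hAc hAn v
  have hgB : IsGreatest ((fun x => ⟪x, v⟫) '' B) h := hsv ▸ suppFn_isGreatest hBc hBn v
  have hleast : ∀ {C : Set E}, IsCompact C → C.Nonempty → C = -C →
      IsGreatest ((fun x => ⟪x, v⟫) '' C) h → IsLeast ((fun x => ⟪x, v⟫) '' C) (-h) := by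
    intro C hCc hCn hCs hg
    have h1 : suppFn C v = h := hg.csSup_eq
    have hgneg : IsGreatest ((fun x => ⟪x, -v⟫) '' C) h := by
      have h2 := suppFn_isGreatest hCc hCn (-v)
      rw [suppFn_neg_symm hCs v, h1] at h2
      exact h2
    constructor
    · obtain ⟨x, hx, hxe⟩ := hgneg.1
      refine ⟨x, hx, ?_⟩
      simp only [inner_neg_right] at hxe
      show (⟪x, v⟫ : ℝ) = -h
      linarith
    · rintro r ⟨x, hx, rfl⟩
      have h3 := hgneg.2 ⟨x, hx, rfl⟩
      simp only [inner_neg_right] at h3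
      show -h ≤ (⟪x, v⟫ : ℝ)
      linarith
  have hA'c : IsCompact (ψe '' A) := hAc.image hcont
  have hB'c : IsCompact (ψe '' B) := hBc.image hcont
  have hAg' : IsGreatest (Prod.fst '' (ψe '' A)) h := by rw [hfst]; exact hgA
  have hBg' : IsGreatest (Prod.fst '' (ψe '' B)) h := by rw [hfst]; exact hgB
  have hAl' : IsLeast (Prod.fst '' (ψe '' A)) (-h) := by rw [hfst]; exact hleast hAc hAn hAs hgA
  have hBl' : IsLeast (Prod.fst '' (ψe '' B)) (-h) := by rw [hfst]; exact hleast hBc hBn hBs hgB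
  have hcore := core_R2 hA'c (hconv hAv) hB'c (hconv hBv) hAg' hAl' hBg' hBl'
  have hvolim : ∀ {C : Set E}, IsCompact C → volume (ψe '' C) = volume C := by
    intro C hCc
    rw [MeasurableEquiv.image_eq_preimage_symm]
    exact (MeasurePreserving.symm ψe hmp).measure_preimage
      hCc.isClosed.measurableSet.nullMeasurableSet
  rw [hvolim hAc, hvolim hBc, ← himage_add, hvolim (hAc.add hBc)] at hcore
  exact hcore

end bonnesen

lemma bonnesen_E_real {A B : Set (EuclideanSpace ℝ (Fin 2))}
    (hAc : IsCompact A) (hAv : Convex ℝ A) (hAn : A.Nonempty) (hAs : A = -A)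
    (hBc : IsCompact B) (hBv : Convex ℝ B) (hBn : B.Nonempty) (hBs : B = -B)
    {u : EuclideanSpace ℝ (Fin 2)} (hu : u ≠ 0) (hsup : suppFn A u = suppFn B u) :
    2 * (volume A).toReal + 2 * (volume B).toReal ≤ (volume (A + B)).toReal := by
  have hkey := bonnesen_E hAc hAv hAn hAs hBc hBv hBn hBs hu hsup
  have hfin : volume (A + B) ≠ ⊤ := (hAc.add hBc).measure_lt_top.ne
  have h1 := ENNReal.toReal_mono hfin hkey
  rw [ENNReal.toReal_add (ENNReal.mul_ne_top (by norm_num) hAc.measure_lt_top.ne)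
    (ENNReal.mul_ne_top (by norm_num) hBc.measure_lt_top.ne),
    ENNReal.toReal_mul, ENNReal.toReal_mul] at h1
  norm_num at h1
  convert h1 using 2 <;> norm_num

section quad

local notation "E" => EuclideanSpace ℝ (Fin 2)

lemma bonnesen_quad {K L : Set (EuclideanSpace ℝ (Fin 2))}
    (hKc : IsCompact K) (hKv : Convex ℝ K)
    (hK0 : (0 : EuclideanSpace ℝ (Fin 2)) ∈ interior K) (hKs : K = -K)
    (hLc : IsCompact L) (hLv : Convex ℝ L)
    (hL0 : (0 : EuclideanSpace ℝ (Fin 2)) ∈ interior L) (hLs : L = -L)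
    {V : ℝ}
    (hMVL : ∀ t : ℝ, 0 ≤ t → (volume (K + t • L)).toReal
      = (volume K).toReal + 2 * t * V + t ^ 2 * (volume L).toReal)
    {u : EuclideanSpace ℝ (Fin 2)} (hu : u ≠ 0) :
    (volume K).toReal * (suppFn L u / suppFn K u) ^ 2
      - 2 * V * (suppFn L u / suppFn K u) + (volume L).toReal ≤ 0 := by
  have hKn : K.Nonempty := ⟨0, interior_subset hK0⟩
  have hLn : L.Nonempty := ⟨0, interior_subset hL0⟩
  have hKpos : 0 < suppFn K u := suppFn_pos hKc hK0 hu
  have hLpos : 0 < suppFn L u := suppFn_pos hLc hL0 hu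
  set s : ℝ := suppFn L u / suppFn K u with hs
  have hspos : 0 < s := div_pos hLpos hKpos
  -- the body s • K
  have hAc : IsCompact (s • K) := hKc.image (continuous_id.const_smul s)
  have hAv : Convex ℝ (s • K) := hKv.smul s
  have hAn : (s • K).Nonempty := hKn.smul_set
  have hAs : s • K = -(s • K) := by
    conv_lhs => rw [hKs]
    exact Set.smul_set_neg s K
  have hsupA : suppFn (s • K) u = suppFn L u := by
    rw [suppFn_smul_set hKc hKn hspos.le u, hs, div_mul_cancel₀ _ hKpos.ne']
  have happ := bonnesen_E_real hAc hAv hAn hAs hLc hLv hLn hLs hu hsupA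
  -- compute volumes
  have hsmul_vol : ∀ (c : ℝ), 0 ≤ c → ∀ (C : Set E), (volume (c • C)).toReal
      = c ^ 2 * (volume C).toReal := by
    intro c hc C
    rw [Measure.addHaar_smul_of_nonneg volume hc C, finrank_euclideanSpace_fin,
      ENNReal.toReal_mul, ENNReal.toReal_ofReal (by positivity)]
  have hdecomp : s • K + L = s • (K + s⁻¹ • L) := by
    rw [smul_add s K (s⁻¹ • L), smul_smul, mul_inv_cancel₀ hspos.ne', one_smul]
  have hrhs : (volume (s • K + L)).toReal
      = s ^ 2 * ((volume K).toReal + 2 * s⁻¹ * V + (s⁻¹) ^ 2 * (volume L).toReal) := by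
    rw [hdecomp, hsmul_vol s hspos.le, hMVL s⁻¹ (inv_nonneg.mpr hspos.le)]
  rw [hrhs, hsmul_vol s hspos.le] at happ
  have hexp : s ^ 2 * ((volume K).toReal + 2 * s⁻¹ * V + (s⁻¹) ^ 2 * (volume L).toReal)
      = s ^ 2 * (volume K).toReal + 2 * s * V + (volume L).toReal := by
    field_simp
  rw [hexp] at happ
  nlinarith [happ]

end quad

/-- the local log-Brunn-Minkowski inequality in the plane.  Here `MV M`
is the mixed area `V(M, K)`, characterized by `vol(K + tM) = vol K + 2t·V(M,K) + t²·vol M`,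
and `S` is the surface area measure of `K` on the unit circle, characterized by
`∫ h_M dS = 2 V(M, K)` for all convex bodies `M`. -/
theorem local_logBM_plane (K L : Set (EuclideanSpace ℝ (Fin 2)))
    (hKc : IsCompact K) (hKv : Convex ℝ K)
    (hK0 : (0 : EuclideanSpace ℝ (Fin 2)) ∈ interior K) (hKs : K = -K)
    (hLc : IsCompact L) (hLv : Convex ℝ L)
    (hL0 : (0 : EuclideanSpace ℝ (Fin 2)) ∈ interior L) (hLs : L = -L)
    (MV : Set (EuclideanSpace ℝ (Fin 2)) → ℝ)
    (hMV : ∀ M : Set (EuclideanSpace ℝ (Fin 2)), IsCompact M → Convex ℝ M →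
      (0 : EuclideanSpace ℝ (Fin 2)) ∈ interior M → ∀ t : ℝ, 0 ≤ t →
      (volume (K + t • M)).toReal
        = (volume K).toReal + 2 * t * MV M + t ^ 2 * (volume M).toReal)
    (S : Measure (EuclideanSpace ℝ (Fin 2)))
    (hS : ∀ M : Set (EuclideanSpace ℝ (Fin 2)), IsCompact M → Convex ℝ M →
      (0 : EuclideanSpace ℝ (Fin 2)) ∈ interior M →
      ∫ x, suppFn M x ∂S = 2 * MV M) :
    2 * (volume L).toReal * (volume K).toReal - 4 * (MV L) ^ 2
      + (volume K).toReal * ∫ x, (suppFn L x) ^ 2 / suppFn K x ∂S ≤ 0 := by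
  have hKn : K.Nonempty := ⟨0, interior_subset hK0⟩
  have hLn : L.Nonempty := ⟨0, interior_subset hL0⟩
  set vK := (volume K).toReal with hvK
  set vL := (volume L).toReal with hvL
  have hvLnn : 0 ≤ vL := ENNReal.toReal_nonneg
  obtain ⟨εK, hεK, hballK⟩ := Metric.mem_nhds_iff.mp (mem_interior_iff_mem_nhds.mp hK0)
  have hvKpos : 0 < vK := ENNReal.toReal_pos
    (lt_of_lt_of_le (Metric.measure_ball_pos volume 0 hεK) (measure_mono hballK)).ne'
    hKc.measure_lt_top.ne
  -- MV K = vK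
  have hMVK : MV K = vK := by
    have h1 := hMV K hKc hKv hK0 1 zero_le_one
    have h2 : K + (1:ℝ) • K = (2:ℝ) • K := by
      rw [one_smul, show (2:ℝ) = 1 + 1 by norm_num,
        hKv.add_smul zero_le_one zero_le_one, one_smul]
    rw [h2] at h1
    have h3 : (volume ((2:ℝ) • K)).toReal = 4 * vK := by
      rw [Measure.addHaar_smul_of_nonneg volume (by norm_num : (0:ℝ) ≤ 2) K,
        finrank_euclideanSpace_fin, ENNReal.toReal_mul, ENNReal.toReal_ofReal (by norm_num)]
      norm_num
      exact hvK.symm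
    rw [h3] at h1
    linarith
  -- a dilate of K inside L
  obtain ⟨R, hR, hKR⟩ := hKc.isBounded.subset_closedBall_lt 0 0
  obtain ⟨εL, hεL, hballL⟩ := Metric.mem_nhds_iff.mp (mem_interior_iff_mem_nhds.mp hL0)
  set δ : ℝ := εL / (2 * R) with hδ
  have hδpos : 0 < δ := by positivity
  have hδK : δ • K ⊆ L := by
    rintro _ ⟨x, hx, rfl⟩
    apply hballL
    have hxR : ‖x‖ ≤ R := by
      have := hKR hx
      rwa [Metric.mem_closedBall, dist_zero_right] at this
    rw [Metric.mem_ball, dist_zero_right, norm_smul, Real.norm_eq_abs, abs_of_pos hδpos]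
    have hcalc : δ * ‖x‖ ≤ δ * R := mul_le_mul_of_nonneg_left hxR hδpos.le
    have hdr : δ * R = εL / 2 := by
      rw [hδ]; field_simp
    rw [hdr] at hcalc
    linarith
  -- MV L > 0
  have hMVLpos : 0 < MV L := by
    have key : ∀ t : ℝ, 0 < t → δ * vK ≤ MV L + t * (vL / 2) := by
      intro t ht
      have hsub : (1 + t * δ) • K ⊆ K + t • L := by
        rw [hKv.add_smul zero_le_one (by positivity), one_smul]
        apply Set.add_subset_add_left
        rw [mul_smul]
        exact Set.smul_set_mono hδK
      have hmono := measure_mono (μ := (volume : Measure (EuclideanSpace ℝ (Fin 2)))) hsub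
      have hfin : volume (K + t • L) ≠ ⊤ :=
        (hKc.add (hLc.image (continuous_id.const_smul t))).measure_lt_top.ne
      have h4 := ENNReal.toReal_mono hfin hmono
      rw [hMV L hLc hLv hL0 t ht.le] at h4
      have h5 : (volume ((1 + t * δ) • K)).toReal = (1 + t * δ) ^ 2 * vK := by
        rw [Measure.addHaar_smul_of_nonneg volume (by positivity) K,
          finrank_euclideanSpace_fin, ENNReal.toReal_mul, ENNReal.toReal_ofReal (by positivity)]
      rw [h5] at h4
      nlinarith [sq_nonneg (t * δ), ht, hδpos, hvKpos]
    by_contra hcon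
    push_neg at hcon
    set w : ℝ := δ * vK / (vL + 1) with hw
    have hwpos : 0 < w := by positivity
    have hweq : w * (vL + 1) = δ * vK := by
      rw [hw]; field_simp
    have hkey := key w hwpos
    nlinarith [hweq, hkey, hcon, hwpos, hvLnn]
  -- integrability
  have hSK := hS K hKc hKv hK0
  have hSL := hS L hLc hLv hL0
  have hintK : Integrable (suppFn K) S := by
    by_contra hni
    rw [integral_undef hni, hMVK] at hSK
    linarith
  have hintL : Integrable (suppFn L) S := by
    by_contra hni
    rw [integral_undef hni] at hSL
    linarith
  -- pointwise bound
  have hfg : ∀ x, (suppFn L x) ^ 2 / suppFn K x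
      ≤ (2 * MV L * suppFn L x - vL * suppFn K x) / vK := by
    intro x
    by_cases hx : x = 0
    · subst hx
      rw [suppFn_zero_vec hKn, suppFn_zero_vec hLn]
      simp
    · have hKx := suppFn_pos hKc hK0 hx
      have hLx := suppFn_pos hLc hL0 hx
      have hquad := bonnesen_quad hKc hKv hK0 hKs hLc hLv hL0 hLs
        (fun t ht => hMV L hLc hLv hL0 t ht) hx
      rw [div_le_div_iff₀ hKx hvKpos]
      have hq : suppFn L x / suppFn K x * suppFn K x = suppFn L x :=
        div_mul_cancel₀ _ hKx.ne'
      have h1 : (suppFn L x / suppFn K x) ^ 2 * (suppFn K x) ^ 2 = suppFn L x ^ 2 := by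
        rw [← mul_pow, hq]
      have h2 : suppFn L x / suppFn K x * (suppFn K x) ^ 2 = suppFn L x * suppFn K x := by
        rw [pow_two, ← mul_assoc, hq]
      have h3 := mul_le_mul_of_nonneg_right hquad (sq_nonneg (suppFn K x))
      nlinarith [h3, h1, h2]
  have hf0 : ∀ x, 0 ≤ (suppFn L x) ^ 2 / suppFn K x := fun x =>
    div_nonneg (sq_nonneg _) (suppFn_nonneg hKc (interior_subset hK0) x)
  have hgint : Integrable (fun x => (2 * MV L * suppFn L x - vL * suppFn K x) / vK) S :=
    ((hintL.const_mul (2 * MV L)).sub (hintK.const_mul vL)).div_const vK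
  have hIle := integral_mono_of_nonneg (Filter.Eventually.of_forall hf0) hgint
    (Filter.Eventually.of_forall hfg)
  have hg_eq : ∫ x, (2 * MV L * suppFn L x - vL * suppFn K x) / vK ∂S
      = (2 * MV L * (2 * MV L) - vL * (2 * MV K)) / vK := by
    rw [integral_div, integral_sub (hintL.const_mul _) (hintK.const_mul _),
      integral_const_mul, integral_const_mul, hSL, hSK]
  rw [hg_eq, hMVK] at hIle
  have hfin := mul_le_mul_of_nonneg_left hIle hvKpos.le
  rw [mul_comm vK ((2 * MV L * (2 * MV L) - vL * (2 * vK)) / vK),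
    div_mul_cancel₀ _ hvKpos.ne'] at hfin
  nlinarith [hfin]
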